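/- Let A be an n×n integer matrix with Δ = |det(A)| > 0 and let b ∈ ℤ^n. Then there exists y ∈ ℤ^n with y ≥ 0 componentwise, b − y ∈ A·ℤ^n, and ∑_{k=1}^{n} y_k ≤ Δ − 1. -/

import Mathlib

open Matrix


theorem mulVecLin_inj {n : ℕ} (A : Matrix (Fin n) (Fin n) ℤ) (hA : A.det ≠ 0) :
    Function.Injective A.mulVecLin := by
  intro x x' h
  have h2 : A.det • x = A.det • x' := by
    have := congrArg (fun v => A.adjugate *ᵥ v) h
    simpa [Matrix.mulVec_mulVec, Matrix.adjugate_mul] using this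
  funext k
  have := congrFun h2 k
  simp at this
  tauto

theorem card_quot_range {n : ℕ} (A : Matrix (Fin n) (Fin n) ℤ) (hA : A.det ≠ 0) :
    Nat.card ((Fin n → ℤ) ⧸ (LinearMap.range A.mulVecLin).toAddSubgroup) = A.det.natAbs := by
  classical
  set N := LinearMap.range A.mulVecLin with hN
  obtain ⟨m, snf⟩ := N.smithNormalForm (Pi.basisFun ℤ (Fin n))
  set e1 : (Fin n → ℤ) ≃ₗ[ℤ] N :=
    LinearEquiv.ofInjective A.mulVecLin (mulVecLin_inj A hA) with he1
  have hm : m = n := by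
    have e3 := Module.Basis.indexEquiv snf.bN ((Pi.basisFun ℤ (Fin n)).map e1)
    simpa using Fintype.card_congr e3
  subst hm
  have hbij : Function.Bijective snf.f := Finite.injective_iff_bijective.mp snf.f.injective
  set fE : Fin m ≃ Fin m := Equiv.ofBijective snf.f hbij with hfE
  set e2 : (Fin m → ℤ) ≃ₗ[ℤ] N := snf.bM.equiv snf.bN fE.symm with he2
  have hc1 : N.subtype ∘ₗ (e1 : (Fin m → ℤ) →ₗ[ℤ] N) = A.mulVecLin :=
    LinearMap.ext fun x => rfl
  have hd1 : LinearMap.det (N.subtype ∘ₗ (e1 : (Fin m → ℤ) →ₗ[ℤ] N)) = A.det := by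
    rw [hc1, ← Matrix.toLin'_apply', LinearMap.det_toLin']
  -- matrix of the second composite is diagonal
  have hc2 : LinearMap.toMatrix snf.bM snf.bM (N.subtype ∘ₗ (e2 : (Fin m → ℤ) →ₗ[ℤ] N))
      = Matrix.diagonal (fun i => snf.a (fE.symm i)) := by
    ext i j
    rw [LinearMap.toMatrix_apply]
    have : (N.subtype ∘ₗ (e2 : (Fin m → ℤ) →ₗ[ℤ] N)) (snf.bM j)
        = snf.a (fE.symm j) • snf.bM j := by
      rw [LinearMap.comp_apply]
      simp only [LinearEquiv.coe_coe, he2, Submodule.subtype_apply]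
      rw [Module.Basis.equiv_apply, snf.snf (fE.symm j)]
      congr 1
      exact congrArg snf.bM (fE.apply_symm_apply j)
    rw [this, _root_.map_smul, Module.Basis.repr_self]
    by_cases h : i = j <;> simp [h, Matrix.diagonal_apply, Finsupp.single_apply, eq_comm]
  have hd2 : LinearMap.det (N.subtype ∘ₗ (e2 : (Fin m → ℤ) →ₗ[ℤ] N)) = ∏ i, snf.a i := by
    rw [← LinearMap.det_toMatrix snf.bM, hc2, Matrix.det_diagonal]
    exact Fintype.prod_equiv fE.symm _ _ fun i => rfl
  have hassoc := LinearMap.associated_det_comp_equiv N.subtype e1 e2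
  rw [hd1, hd2] at hassoc
  have hnatAbs : A.det.natAbs = (∏ i, snf.a i).natAbs := Int.associated_iff_natAbs.mp hassoc
  -- index computation
  have hidx := snf.toAddSubgroup_index_eq_ite
  simp only [Fintype.card_fin, if_pos rfl] at hidx
  have : (LinearMap.range A.mulVecLin).toAddSubgroup.index
      = ∏ i, (snf.a i).natAbs := by
    rw [← hN, hidx, if_pos trivial]
    exact Finset.prod_congr rfl fun i _ => by
      rw [Ideal.span_singleton_toAddSubgroup_eq_zmultiples, Int.index_zmultiples]
  rw [← AddSubgroup.index, this, hnatAbs]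
  exact (map_prod Int.natAbsHom _ _).symm

theorem stair_sum (y : ℕ → ℤ) (hy : ∀ k, 0 ≤ y k) (t : ℤ) (n : ℕ) :
    ∑ k ∈ Finset.range n, min (y k) (max 0 (t - ∑ j ∈ Finset.range k, y j))
      = min (max 0 t) (∑ k ∈ Finset.range n, y k) := by
  induction n with
  | zero => simp
  | succ n ih =>
    rw [Finset.sum_range_succ, Finset.sum_range_succ, ih]
    have h1 : 0 ≤ ∑ j ∈ Finset.range n, y j := Finset.sum_nonneg fun j _ => hy j
    have h2 := hy n
    omega

/-- **Lemma 5.** For an `n × n` integer matrix `A` with `Δ = |det A| > 0` and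
any `b ∈ ℤ^n`, there exists `y ∈ ℤ^n` with `y ≥ 0` componentwise, `b − y ∈ A·ℤ^n`, and
`∑ k, y k ≤ Δ − 1`. -/
theorem exists_small_residue {n : ℕ} (A : Matrix (Fin n) (Fin n) ℤ) (hA : A.det ≠ 0)
    (b : Fin n → ℤ) :
    ∃ y : Fin n → ℤ, (∀ k, 0 ≤ y k) ∧ (∃ x : Fin n → ℤ, A.mulVec x + y = b) ∧
      (∑ k, y k) ≤ |A.det| - 1 := by
  classical
  set N := LinearMap.range A.mulVecLin with hN
  set Δ : ℕ := A.det.natAbs with hΔdef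
  have hΔ : 0 < Δ := Int.natAbs_pos.mpr hA
  have hdet_smul : ∀ v : Fin n → ℤ, A.det • v ∈ N := by
    intro v
    refine ⟨A.adjugate *ᵥ v, ?_⟩
    rw [mulVecLin_apply, mulVec_mulVec, mul_adjugate, smul_mulVec, one_mulVec]
  clear_value N Δ
  have hex : ∃ s : ℕ, ∃ y : Fin n → ℤ,
      (∀ k, 0 ≤ y k) ∧ b - y ∈ N ∧ ∑ k, y k = (s : ℤ) := by
    set D : ℤ := A.det * A.det with hD
    have hD1 : 1 ≤ D := by rcases hA.lt_or_gt with h | h <;> nlinarith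
    set T : ℤ := ∑ k, |b k| with hT
    have hTk : ∀ k, |b k| ≤ T := fun k =>
      Finset.single_le_sum (f := fun k => |b k|) (fun i _ => abs_nonneg _) (Finset.mem_univ k)
    have hT0 : 0 ≤ T := Finset.sum_nonneg fun k _ => abs_nonneg _
    set y0 : Fin n → ℤ := fun k => b k + D * T with hy0
    have hy0nn : ∀ k, 0 ≤ y0 k := by
      intro k
      have h1 := hTk k
      have habs : -b k ≤ |b k| := neg_le_abs _
      have h2 : T ≤ D * T := le_mul_of_one_le_left hT0 hD1
      simp only [hy0]
      omega
    refine ⟨(∑ k, y0 k).toNat, y0, hy0nn, ?_, ?_⟩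
    · have : b - y0 = A.det • (A.det • ((-T) • fun _ => (1:ℤ))) := by
        funext k
        simp [hy0, hD]
        ring
      rw [this]
      exact Submodule.smul_mem _ _ (hdet_smul _)
    · rw [Int.toNat_of_nonneg (Finset.sum_nonneg fun k _ => hy0nn k)]
  have hPex : ∃ s : ℕ, ∃ y : Fin n → ℤ,
      (∀ k, 0 ≤ y k) ∧ b - y ∈ N ∧ ∑ k, y k = (s : ℤ) := hex
  set s₀ := Nat.find hPex with hs₀
  obtain ⟨y, hynn, hymem, hysum⟩ := Nat.find_spec hPex
  rw [← hs₀] at hysum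
  have hmin0 : ∀ m, m < s₀ → ¬ (∃ y : Fin n → ℤ,
      (∀ k, 0 ≤ y k) ∧ b - y ∈ N ∧ ∑ k, y k = (m : ℤ)) := fun m hm => Nat.find_min hPex (hs₀ ▸ hm)
  clear_value s₀
  have hmin : s₀ < Δ := by
    by_contra hcon
    push_neg at hcon  -- Δ ≤ s₀
    set Y : ℕ → ℤ := fun j => if h : j < n then y ⟨j, h⟩ else 0 with hY
    have hYnn : ∀ j, 0 ≤ Y j := by
      intro j
      simp only [hY]
      split
      · exact hynn _
      · exact le_rfl
    set F : ℤ → ℕ → ℤ := fun t j =>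
      min (Y j) (max 0 (t - ∑ i ∈ Finset.range j, Y i)) with hF
    set g : ℕ → Fin n → ℤ := fun t k => F (t : ℤ) k.val with hg
    have hgy : ∀ t (k : Fin n), 0 ≤ g t k ∧ g t k ≤ y k := by
      intro t k
      have h1 : Y k.val = y k := by simp [hY, k.isLt]
      constructor
      · simp only [hg, hF, h1, le_min_iff]
        exact ⟨hynn k, le_max_left _ _⟩
      · simp only [hg, hF, h1]
        exact min_le_left _ _
    have hgsum : ∀ t : ℕ, t ≤ s₀ → ∑ k, g t k = (t : ℤ) := by
      intro t ht
      have h1 : ∑ k, g t k = ∑ j ∈ Finset.range n, F (t : ℤ) j :=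
        Fin.sum_univ_eq_sum_range (F (t : ℤ)) n
      have h2 : ∑ j ∈ Finset.range n, Y j = ∑ k, y k := by
        rw [← Fin.sum_univ_eq_sum_range Y n]
        exact Finset.sum_congr rfl fun k _ => by simp [hY, k.isLt]
      rw [h1, hF, stair_sum Y hYnn, h2, hysum]
      have : (0:ℤ) ≤ t := Int.ofNat_nonneg t
      have ht' : (t:ℤ) ≤ (s₀:ℤ) := by exact_mod_cast ht
      omega
    -- pigeonhole in the quotient
    have hcard := card_quot_range A hA
    rw [← hN, ← hΔdef] at hcard
    have hfin : Finite ((Fin n → ℤ) ⧸ N.toAddSubgroup) :=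
      Nat.finite_of_card_ne_zero (by omega)
    have hft : Fintype ((Fin n → ℤ) ⧸ N.toAddSubgroup) := Fintype.ofFinite _
    have hcard' : Fintype.card ((Fin n → ℤ) ⧸ N.toAddSubgroup) = Δ := by
      rw [← Nat.card_eq_fintype_card, hcard]
    obtain ⟨s, t, hst, heq⟩ := Fintype.exists_ne_map_eq_of_card_lt
      (fun t : Fin (Δ + 1) => QuotientAddGroup.mk (s := N.toAddSubgroup) (g t.val))
      (by rw [hcard', Fintype.card_fin]; omega)
    -- wlog s < t
    wlog hlt : (s : ℕ) < (t : ℕ) generalizing s t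
    · have hne := Fin.val_ne_of_ne hst
      exact this t s hst.symm heq.symm (by omega)
    have hd : g t.val - g s.val ∈ N := by
      have := (QuotientAddGroup.eq (s := N.toAddSubgroup)).mp heq
      rwa [neg_add_eq_sub] at this
    set y' : Fin n → ℤ := y - (g t.val - g s.val) with hy'
    have hy'nn : ∀ k, 0 ≤ y' k := by
      intro k
      have h1 := hgy t.val k
      have h2 := hgy s.val k
      simp only [hy', Pi.sub_apply]
      omega
    have hy'mem : b - y' ∈ N := by
      have : b - y' = (b - y) + (g t.val - g s.val) := by ring
      rw [this]
      exact Submodule.add_mem _ hymem hd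
    have hts : t.val ≤ Δ := Nat.lt_succ_iff.mp t.isLt
    have hsum' : ∑ k, y' k = (s₀ : ℤ) - t.val + s.val := by
      simp only [hy', Pi.sub_apply]
      rw [Finset.sum_sub_distrib, Finset.sum_sub_distrib, hysum,
        hgsum t.val (le_trans hts hcon), hgsum s.val (le_trans (le_of_lt (lt_of_lt_of_le hlt hts)) hcon)]
      ring
    have hPs' : ∃ y : Fin n → ℤ, (∀ k, 0 ≤ y k) ∧ b - y ∈ N ∧
        ∑ k, y k = ((s₀ - t.val + s.val : ℕ) : ℤ) := by
      refine ⟨y', hy'nn, hy'mem, ?_⟩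
      rw [hsum']
      have : t.val ≤ s₀ := le_trans hts hcon
      push_cast [Nat.cast_sub]
      omega
    exact hmin0 (s₀ - t.val + s.val) (by omega) hPs'
  refine ⟨y, hynn, ?_, ?_⟩
  · rw [hN] at hymem
    obtain ⟨x, hx⟩ := hymem
    refine ⟨x, ?_⟩
    rw [← mulVecLin_apply, hx]
    ring
  · rw [hysum, Int.abs_eq_natAbs, ← hΔdef]
    omega
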